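/- arXiv:1806.10125 — 3 statements merged into one kernel-verified Lean document; each statement's English description precedes it below -/
import Mathlib

section
/- Let n ≥ 4 and let Ā and B̄ be (n−2)×(n−2) real matrices, each of block form [[A,0],[0,0]] or [[0,A],[0,0]] for some invertible (n−3)×(n−3) real matrix A. Let G_Ā be a real Lie algebra with basis (X₁, …, X_{n−2}, Y, Z) whose Lie brackets are determined by: [X_i, X_j] = 0 for all i, j; [Y, X_i] = 0 for all i; [Z, X_j] = Σ_i Ā_{ij} X_i for all j; and [Z, Y] = X_{n−2}; and let G_B̄ be defined in the same way from B̄. Then G_Ā and G_B̄ are isomorphic as Lie algebras if and only if Ā ∼_p B̄, i.e. there exist c ∈ ℝ∖{0} and an invertible (n−2)×(n−2) real matrix C with cĀ = C⁻¹B̄C. -/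
open Module

/-- Two square real matrices are *proportional similar* if `c • M = C⁻¹ * N * C` for some
nonzero scalar `c` and invertible matrix `C`. -/
def PropSimilar {n : ℕ} (M N : Matrix (Fin n) (Fin n) ℝ) : Prop :=
  ∃ (c : ℝ) (C : Matrix (Fin n) (Fin n) ℝ), c ≠ 0 ∧ IsUnit C ∧ c • M = C⁻¹ * N * C

/-- The `(k+1)`-square matrix `[[A, 0], [0, 0]]`: `A` occupies rows and columns `0,…,k-1`. -/
def blockDiag {k : ℕ} (A : Matrix (Fin k) (Fin k) ℝ) : Matrix (Fin (k + 1)) (Fin (k + 1)) ℝ :=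
  fun i j => if h : (i : ℕ) < k ∧ (j : ℕ) < k then A ⟨i, h.1⟩ ⟨j, h.2⟩ else 0

/-- The `(k+1)`-square matrix `[[0, A], [0, 0]]`: zero first column, `A` occupies rows
`0,…,k-1` and columns `1,…,k`. -/
def blockShift {k : ℕ} (A : Matrix (Fin k) (Fin k) ℝ) : Matrix (Fin (k + 1)) (Fin (k + 1)) ℝ :=
  fun i j =>
    if h : (i : ℕ) < k ∧ 0 < (j : ℕ) then A ⟨i, h.1⟩ ⟨(j : ℕ) - 1, by
      have := j.isLt; omega⟩ else 0

/-- A basis `(X₁, …, X_{k+1}, Y, Z)` of a real Lie algebra `L` (indexed by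
`Fin (k+1) ⊕ Fin 2`, with `Y = inr 0` and `Z = inr 1`) realizes the Lie algebra `G_Ā`
attached to a `(k+1)`-square matrix `Ā` if `[Xᵢ, Xⱼ] = 0`, `[Y, Xᵢ] = 0`,
`[Z, Xⱼ] = ∑ i, Ā i j • Xᵢ` and `[Z, Y] = X_{k+1}` (the last basis vector). -/
def IsStructureBasis {L : Type*} [LieRing L] [LieAlgebra ℝ L] {k : ℕ}
    (Abar : Matrix (Fin (k + 1)) (Fin (k + 1)) ℝ)
    (B : Basis (Fin (k + 1) ⊕ Fin 2) ℝ L) : Prop :=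
  (∀ i j : Fin (k + 1), ⁅B (Sum.inl i), B (Sum.inl j)⁆ = 0) ∧
  (∀ i : Fin (k + 1), ⁅B (Sum.inr 0), B (Sum.inl i)⁆ = 0) ∧
  (∀ j : Fin (k + 1), ⁅B (Sum.inr 1), B (Sum.inl j)⁆ = ∑ i, Abar i j • B (Sum.inl i)) ∧
  ⁅B (Sum.inr 1), B (Sum.inr 0)⁆ = B (Sum.inl (Fin.last k))

variable {k : ℕ}

lemma blockDiag_cast (A : Matrix (Fin k) (Fin k) ℝ) (i j : Fin k) :
    blockDiag A i.castSucc j.castSucc = A i j := by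
  simp only [blockDiag, Fin.coe_castSucc]
  rw [dif_pos ⟨i.isLt, j.isLt⟩]

lemma blockDiag_last_row (A : Matrix (Fin k) (Fin k) ℝ) (j) :
    blockDiag A (Fin.last k) j = 0 := by
  simp [blockDiag]

lemma blockDiag_last_col (A : Matrix (Fin k) (Fin k) ℝ) (i) :
    blockDiag A i (Fin.last k) = 0 := by
  simp [blockDiag]

lemma blockShift_cast (A : Matrix (Fin k) (Fin k) ℝ) (i j : Fin k) :
    blockShift A i.castSucc j.succ = A i j := by
  simp only [blockShift, Fin.coe_castSucc, Fin.val_succ]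
  rw [dif_pos ⟨i.isLt, Nat.succ_pos _⟩]
  congr 1 <;> exact Fin.ext (by simp)

lemma blockShift_last_row (A : Matrix (Fin k) (Fin k) ℝ) (j) :
    blockShift A (Fin.last k) j = 0 := by
  simp [blockShift]

lemma blockShift_zero_col (A : Matrix (Fin k) (Fin k) ℝ) (i) :
    blockShift A i 0 = 0 := by
  simp [blockShift]

section BlockProps

lemma block_props (hk : 0 < k) (M : Matrix (Fin (k+1)) (Fin (k+1)) ℝ)
    (h : ∃ A : Matrix (Fin k) (Fin k) ℝ, IsUnit A ∧ (M = blockDiag A ∨ M = blockShift A)) :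
    M ≠ 0 ∧ (∀ j, M (Fin.last k) j = 0) ∧
    (∀ u, Matrix.vecMul u M = 0 → ∀ i, i ≠ Fin.last k → u i = 0) ∧
    (∀ w : Fin (k+1) → ℝ, w (Fin.last k) = 0 → ∃ v, M.mulVec v = w) := by
  obtain ⟨A, hA, hM⟩ := h
  have hAd : IsUnit A.det := (Matrix.isUnit_iff_isUnit_det A).mp hA
  have hA1 : A * A⁻¹ = 1 := Matrix.mul_nonsing_inv A hAd
  have hA1' : A⁻¹ * A = 1 := Matrix.nonsing_inv_mul A hAd
  have hAne : A ≠ 0 := by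
    intro h0
    rw [h0, Matrix.mul_zero] at hA1'
    have h2 := congrFun (congrFun hA1' ⟨0, hk⟩) ⟨0, hk⟩
    simp [Matrix.one_apply] at h2
  obtain ⟨i0, j0, hij0⟩ : ∃ i j, A i j ≠ 0 := by
    by_contra hc
    push_neg at hc
    exact hAne (by ext i j; simp [hc])
  refine ⟨?_, ?_, ?_, ?_⟩
  · intro h0
    rcases hM with rfl | rfl
    · exact hij0 (by rw [← blockDiag_cast A i0 j0, h0]; rfl)
    · exact hij0 (by rw [← blockShift_cast A i0 j0, h0]; rfl)
  · intro j
    rcases hM with rfl | rfl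
    · exact blockDiag_last_row A j
    · exact blockShift_last_row A j
  · intro u hu i hi
    obtain ⟨i', rfl⟩ := Fin.exists_castSucc_eq.mpr hi
    set u' : Fin k → ℝ := fun m => u m.castSucc with hu'
    have hvm : Matrix.vecMul u' A = 0 := by
      funext j
      rcases hM with rfl | rfl
      · have h0 := congrFun hu j.castSucc
        simp only [Matrix.vecMul, dotProduct, Pi.zero_apply] at h0
        rw [Fin.sum_univ_castSucc] at h0
        simp only [blockDiag_cast, blockDiag_last_row, mul_zero, add_zero] at h0
        simpa [Matrix.vecMul, dotProduct, hu'] using h0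
      · have h0 := congrFun hu j.succ
        simp only [Matrix.vecMul, dotProduct, Pi.zero_apply] at h0
        rw [Fin.sum_univ_castSucc] at h0
        simp only [blockShift_cast, blockShift_last_row, mul_zero, add_zero] at h0
        simpa [Matrix.vecMul, dotProduct, hu'] using h0
    have hz : u' = 0 := by
      calc u' = Matrix.vecMul u' (A * A⁻¹) := by rw [hA1, Matrix.vecMul_one]
        _ = Matrix.vecMul (Matrix.vecMul u' A) A⁻¹ := (Matrix.vecMul_vecMul _ _ _).symm
        _ = 0 := by rw [hvm, Matrix.zero_vecMul]
    exact congrFun hz i'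
  · intro w hw
    rcases hM with rfl | rfl
    · refine ⟨Fin.lastCases 0 (A⁻¹.mulVec fun i => w i.castSucc), ?_⟩
      have hkey : A.mulVec (A⁻¹.mulVec fun i => w i.castSucc) = fun i => w i.castSucc := by
        rw [Matrix.mulVec_mulVec, hA1, Matrix.one_mulVec]
      funext t
      induction t using Fin.lastCases with
      | last => simpa [Matrix.mulVec, dotProduct, blockDiag_last_row] using hw.symm
      | cast i =>
        have h2 := congrFun hkey i
        simp only [Matrix.mulVec, dotProduct] at h2 ⊢
        rw [Fin.sum_univ_castSucc]
        simpa [blockDiag_cast, blockDiag_last_col, Matrix.mulVec, dotProduct] using h2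
    · refine ⟨Fin.cases 0 (A⁻¹.mulVec fun i => w i.castSucc), ?_⟩
      have hkey : A.mulVec (A⁻¹.mulVec fun i => w i.castSucc) = fun i => w i.castSucc := by
        rw [Matrix.mulVec_mulVec, hA1, Matrix.one_mulVec]
      funext t
      induction t using Fin.lastCases with
      | last => simpa [Matrix.mulVec, dotProduct, blockShift_last_row] using hw.symm
      | cast i =>
        have h2 := congrFun hkey i
        simp only [Matrix.mulVec, dotProduct] at h2 ⊢
        rw [Fin.sum_univ_succ]
        simpa [blockShift_cast, blockShift_zero_col, Matrix.mulVec, dotProduct] using h2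

end BlockProps

section Lie
variable {L : Type*} [LieRing L] [LieAlgebra ℝ L]
  {M : Matrix (Fin (k+1)) (Fin (k+1)) ℝ} {B : Basis (Fin (k+1) ⊕ Fin 2) ℝ L}

lemma sum_lie' {ι : Type*} (s : Finset ι) (f : ι → L) (y : L) :
    ⁅∑ i ∈ s, f i, y⁆ = ∑ i ∈ s, ⁅f i, y⁆ := by
  classical
  induction s using Finset.induction_on with
  | empty => simp
  | insert _ _ h ih => rw [Finset.sum_insert h, Finset.sum_insert h, add_lie, ih]

lemma lie_sum' {ι : Type*} (s : Finset ι) (f : ι → L) (y : L) :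
    ⁅y, ∑ i ∈ s, f i⁆ = ∑ i ∈ s, ⁅y, f i⁆ := by
  classical
  induction s using Finset.induction_on with
  | empty => simp
  | insert _ _ h ih => rw [Finset.sum_insert h, Finset.sum_insert h, lie_add, ih]

lemma decomp (B : Basis (Fin (k+1) ⊕ Fin 2) ℝ L) (v : L) :
    v = B.repr v (Sum.inr 1) • B (Sum.inr 1) +
      (B.repr v (Sum.inr 0) • B (Sum.inr 0) + ∑ m, B.repr v (Sum.inl m) • B (Sum.inl m)) := by
  conv_lhs => rw [← B.sum_repr v]
  rw [Fintype.sum_sum_type, Fin.sum_univ_two]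
  abel

lemma repr_combo_inl (β : ℝ) (x : Fin (k+1) → ℝ) (i : Fin (k+1)) :
    B.repr (β • B (Sum.inr 0) + ∑ m, x m • B (Sum.inl m)) (Sum.inl i) = x i := by
  simp [map_add, map_smul, map_sum, Basis.repr_self, Finsupp.single_apply,
    Finset.sum_apply', Finsupp.smul_apply]

lemma repr_combo_inr (β : ℝ) (x : Fin (k+1) → ℝ) (a : Fin 2) :
    B.repr (β • B (Sum.inr 0) + ∑ m, x m • B (Sum.inl m)) (Sum.inr a) =
      if a = 0 then β else 0 := by
  simp [map_add, map_smul, map_sum, Basis.repr_self, Finsupp.single_apply,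
    Finset.sum_apply', Finsupp.smul_apply, eq_comm]

lemma lie_general (hB : IsStructureBasis M B) (u : L) (β : ℝ) (x : Fin (k+1) → ℝ) :
    ⁅u, β • B (Sum.inr 0) + ∑ m, x m • B (Sum.inl m)⁆ =
      B.repr u (Sum.inr 1) •
        (β • B (Sum.inl (Fin.last k)) + ∑ i, M.mulVec x i • B (Sum.inl i)) := by
  obtain ⟨h1, h2, h3, h4⟩ := hB
  set R := β • B (Sum.inr 0) + ∑ m, x m • B (Sum.inl m) with hR
  have hXR : ∀ i, ⁅B (Sum.inl i), R⁆ = 0 := by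
    intro i
    simp only [hR, lie_add, lie_smul, lie_sum']
    have hy : ⁅B (Sum.inl i), B (Sum.inr 0)⁆ = 0 := by
      rw [← lie_skew, h2 i, neg_zero]
    simp [hy, h1]
  have hYR : ⁅B (Sum.inr 0), R⁆ = 0 := by
    simp [hR, lie_add, lie_smul, lie_sum', h2]
  have hZR : ⁅B (Sum.inr 1), R⁆ =
      β • B (Sum.inl (Fin.last k)) + ∑ i, M.mulVec x i • B (Sum.inl i) := by
    simp only [hR, lie_add, lie_smul, lie_sum', h3, h4]
    congr 1
    simp only [Finset.smul_sum, smul_smul]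
    rw [Finset.sum_comm]
    refine Finset.sum_congr rfl fun i _ => ?_
    rw [← Finset.sum_smul]
    congr 1
    simp [Matrix.mulVec, dotProduct, mul_comm]
  conv_lhs => rw [← B.sum_repr u]
  rw [sum_lie', Fintype.sum_sum_type, Fin.sum_univ_two]
  simp [smul_lie, hXR, hYR, hZR]

lemma lie_Z (hB : IsStructureBasis M B) (v : L) :
    ⁅B (Sum.inr 1), v⁆ = B.repr v (Sum.inr 0) • B (Sum.inl (Fin.last k)) +
      ∑ i, M.mulVec (fun m => B.repr v (Sum.inl m)) i • B (Sum.inl i) := by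
  conv_lhs => rw [decomp B v]
  rw [lie_add, lie_smul, lie_self, smul_zero, zero_add, lie_general hB]
  simp [Basis.repr_self, Finsupp.single_apply]

lemma lie_repr_inr (hB : IsStructureBasis M B) (u v : L) (a : Fin 2) :
    B.repr ⁅u, v⁆ (Sum.inr a) = 0 := by
  have hPu : ⁅B.repr u (Sum.inr 0) • B (Sum.inr 0) +
        ∑ m, B.repr u (Sum.inl m) • B (Sum.inl m), v⁆
      = - (B.repr v (Sum.inr 1) • (B.repr u (Sum.inr 0) • B (Sum.inl (Fin.last k)) +
          ∑ i, M.mulVec (fun m => B.repr u (Sum.inl m)) i • B (Sum.inl i))) := by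
    rw [← lie_skew, lie_general hB]
  conv_lhs => rw [decomp B u, add_lie, smul_lie, hPu, lie_Z hB v]
  simp [map_add, map_smul, map_neg, map_sum, Basis.repr_self, Finsupp.single_apply,
    Finset.sum_apply', Finsupp.smul_apply]

lemma eq_sum_of_repr (B : Basis (Fin (k+1) ⊕ Fin 2) ℝ L) (z : L)
    (hz : ∀ a : Fin 2, B.repr z (Sum.inr a) = 0) :
    z = ∑ i, B.repr z (Sum.inl i) • B (Sum.inl i) := by
  conv_lhs => rw [decomp B z]
  rw [hz 0, hz 1]
  simp

lemma lie_combo (hB : IsStructureBasis M B) (u : L) (x : Fin (k+1) → ℝ) :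
    ⁅u, ∑ m, x m • B (Sum.inl m)⁆ =
      B.repr u (Sum.inr 1) • ∑ i, M.mulVec x i • B (Sum.inl i) := by
  have h := lie_general hB u 0 x
  rw [zero_smul, zero_add, zero_smul, zero_add] at h
  exact h

lemma sum_smul_sum {ι : Type*} [Fintype ι] (P Q : Matrix ι ι ℝ) (x : ι → L) (j : ι) :
    ∑ i, Q i j • (∑ m, P m i • x m) = ∑ m, (P * Q) m j • x m := by
  simp only [Finset.smul_sum, smul_smul]
  rw [Finset.sum_comm]
  refine Finset.sum_congr rfl fun m _ => ?_
  rw [← Finset.sum_smul]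
  congr 1
  simp [Matrix.mul_apply, mul_comm]

lemma mulVec_col (M' : Matrix (Fin (k+1)) (Fin (k+1)) ℝ) (P : Matrix (Fin (k+1)) (Fin (k+1)) ℝ)
    (j i : Fin (k+1)) : M'.mulVec (fun m => P m j) i = (M' * P) i j := by
  simp [Matrix.mulVec, dotProduct, Matrix.mul_apply]

end Lie

section Forward
variable {L₁ L₂ : Type*} [LieRing L₁] [LieAlgebra ℝ L₁] [LieRing L₂] [LieAlgebra ℝ L₂]

lemma lieEquiv_map_sum (e : L₁ ≃ₗ⁅ℝ⁆ L₂) {ι : Type*} (s : Finset ι) (f : ι → L₁) :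
    e (∑ i ∈ s, f i) = ∑ i ∈ s, e (f i) :=
  map_sum e.toLinearEquiv f s

lemma lieEquiv_map_smul (e : L₁ ≃ₗ⁅ℝ⁆ L₂) (c : ℝ) (x : L₁) :
    e (c • x) = c • e x :=
  map_smul e.toLinearEquiv c x

lemma image_repr_inr {Abar Bbar : Matrix (Fin (k+1)) (Fin (k+1)) ℝ}
    {B₁ : Basis (Fin (k+1) ⊕ Fin 2) ℝ L₁} {B₂ : Basis (Fin (k+1) ⊕ Fin 2) ℝ L₂}
    (h₁ : IsStructureBasis Abar B₁) (h₂ : IsStructureBasis Bbar B₂)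
    (hA4 : ∀ w : Fin (k+1) → ℝ, w (Fin.last k) = 0 → ∃ v, Abar.mulVec v = w)
    (e : L₁ ≃ₗ⁅ℝ⁆ L₂) (j : Fin (k+1)) (a : Fin 2) :
    B₂.repr (e (B₁ (Sum.inl j))) (Sum.inr a) = 0 := by
  obtain ⟨y, hy⟩ : ∃ y : L₁, B₁ (Sum.inl j) = ⁅B₁ (Sum.inr 1), y⁆ := by
    by_cases hj : j = Fin.last k
    · exact ⟨B₁ (Sum.inr 0), by rw [hj, h₁.2.2.2]⟩
    · obtain ⟨v, hv⟩ := hA4 (Pi.single j 1)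
        (by rw [Pi.single_eq_of_ne (Ne.symm hj)])
      refine ⟨∑ m, v m • B₁ (Sum.inl m), ?_⟩
      rw [lie_combo h₁, hv]
      simp only [Basis.repr_self, Finsupp.single_apply, if_pos rfl]
      rw [Finset.sum_eq_single j (fun b _ hb => by
        rw [Pi.single_eq_of_ne hb, zero_smul]) (by simp)]
      simp
  rw [hy, LieEquiv.map_lie]
  exact lie_repr_inr h₂ _ _ a

lemma forward_dir {Abar Bbar : Matrix (Fin (k+1)) (Fin (k+1)) ℝ}
    (hA0 : Abar ≠ 0)
    (hA4 : ∀ w : Fin (k+1) → ℝ, w (Fin.last k) = 0 → ∃ v, Abar.mulVec v = w)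
    (hB4 : ∀ w : Fin (k+1) → ℝ, w (Fin.last k) = 0 → ∃ v, Bbar.mulVec v = w)
    (B₁ : Basis (Fin (k+1) ⊕ Fin 2) ℝ L₁) (B₂ : Basis (Fin (k+1) ⊕ Fin 2) ℝ L₂)
    (h₁ : IsStructureBasis Abar B₁) (h₂ : IsStructureBasis Bbar B₂)
    (e : L₁ ≃ₗ⁅ℝ⁆ L₂) : PropSimilar Abar Bbar := by
  set Cm : Matrix (Fin (k+1)) (Fin (k+1)) ℝ :=
    fun i j => B₂.repr (e (B₁ (Sum.inl j))) (Sum.inl i) with hCm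
  set Dm : Matrix (Fin (k+1)) (Fin (k+1)) ℝ :=
    fun i j => B₁.repr (e.symm (B₂ (Sum.inl j))) (Sum.inl i) with hDm
  have hEX : ∀ j, e (B₁ (Sum.inl j)) = ∑ i, Cm i j • B₂ (Sum.inl i) :=
    fun j => eq_sum_of_repr B₂ _ (image_repr_inr h₁ h₂ hA4 e j)
  have hEX' : ∀ j, e.symm (B₂ (Sum.inl j)) = ∑ i, Dm i j • B₁ (Sum.inl i) :=
    fun j => eq_sum_of_repr B₁ _ (image_repr_inr h₂ h₁ hB4 e.symm j)
  have hDC : Dm * Cm = 1 := by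
    have key : ∀ j, B₁ (Sum.inl j) = ∑ m, (Dm * Cm) m j • B₁ (Sum.inl m) := by
      intro j
      conv_lhs => rw [← e.symm_apply_apply (B₁ (Sum.inl j))]
      rw [hEX j, lieEquiv_map_sum]
      simp only [lieEquiv_map_smul, hEX']
      exact sum_smul_sum Dm Cm _ j
    ext m j
    have h2 := congrArg (fun z => B₁.repr z (Sum.inl m)) (key j)
    simp only [map_sum, map_smul, Basis.repr_self, Finsupp.smul_apply,
      Finset.sum_apply', Finsupp.single_apply, smul_eq_mul, mul_ite, mul_one, mul_zero,
      Sum.inl.injEq] at h2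
    rw [Finset.sum_ite_eq' Finset.univ m] at h2
    simp only [Finset.mem_univ, if_true] at h2
    rw [Matrix.one_apply]
    by_cases hmj : m = j
    · subst hmj; rw [if_pos rfl, ← h2, if_pos rfl]
    · rw [if_neg hmj, ← h2, if_neg (fun hc => hmj hc.symm)]
  have hCD : Cm * Dm = 1 := by
    have key : ∀ j, B₂ (Sum.inl j) = ∑ m, (Cm * Dm) m j • B₂ (Sum.inl m) := by
      intro j
      conv_lhs => rw [← e.apply_symm_apply (B₂ (Sum.inl j))]
      rw [hEX' j, lieEquiv_map_sum]
      simp only [lieEquiv_map_smul, hEX]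
      exact sum_smul_sum Cm Dm _ j
    ext m j
    have h2 := congrArg (fun z => B₂.repr z (Sum.inl m)) (key j)
    simp only [map_sum, map_smul, Basis.repr_self, Finsupp.smul_apply,
      Finset.sum_apply', Finsupp.single_apply, smul_eq_mul, mul_ite, mul_one, mul_zero,
      Sum.inl.injEq] at h2
    rw [Finset.sum_ite_eq' Finset.univ m] at h2
    simp only [Finset.mem_univ, if_true] at h2
    rw [Matrix.one_apply]
    by_cases hmj : m = j
    · subst hmj; rw [if_pos rfl, ← h2, if_pos rfl]
    · rw [if_neg hmj, ← h2, if_neg (fun hc => hmj hc.symm)]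
  set γ : ℝ := B₂.repr (e (B₁ (Sum.inr 1))) (Sum.inr 1) with hγdef
  have hkey : Cm * Abar = γ • (Bbar * Cm) := by
    ext i j
    have hbr := congrArg e (h₁.2.2.1 j)
    rw [LieEquiv.map_lie, hEX j, lie_combo h₂, lieEquiv_map_sum] at hbr
    simp only [lieEquiv_map_smul, hEX] at hbr
    rw [sum_smul_sum Cm Abar _ j] at hbr
    have h2 := congrArg (fun z => B₂.repr z (Sum.inl i)) hbr
    simp only [map_sum, map_smul, Basis.repr_self, Finsupp.smul_apply,
      Finset.sum_apply', Finsupp.single_apply, smul_eq_mul, mul_ite, mul_one, mul_zero,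
      Sum.inl.injEq] at h2
    rw [Finset.sum_ite_eq' Finset.univ i, Finset.sum_ite_eq' Finset.univ i] at h2
    simp only [Finset.mem_univ, if_true] at h2
    rw [← h2, Matrix.smul_apply, smul_eq_mul, mulVec_col]
  have hγ : γ ≠ 0 := by
    intro h0
    rw [h0, zero_smul] at hkey
    apply hA0
    calc Abar = (Dm * Cm) * Abar := by rw [hDC, Matrix.one_mul]
      _ = Dm * (Cm * Abar) := by rw [Matrix.mul_assoc]
      _ = 0 := by rw [hkey, Matrix.mul_zero]
  refine ⟨γ⁻¹, Cm, inv_ne_zero hγ, ⟨⟨Cm, Dm, hCD, hDC⟩, rfl⟩, ?_⟩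
  rw [Matrix.inv_eq_left_inv hDC]
  calc γ⁻¹ • Abar = γ⁻¹ • ((Dm * Cm) * Abar) := by rw [hDC, Matrix.one_mul]
    _ = γ⁻¹ • (Dm * (Cm * Abar)) := by rw [Matrix.mul_assoc]
    _ = γ⁻¹ • (γ • (Dm * (Bbar * Cm))) := by rw [hkey, Matrix.mul_smul]
    _ = Dm * Bbar * Cm := by rw [smul_smul, inv_mul_cancel₀ hγ, one_smul, Matrix.mul_assoc]

end Forward

section Backward
variable {L₁ L₂ : Type*} [LieRing L₁] [LieAlgebra ℝ L₁] [LieRing L₂] [LieAlgebra ℝ L₂]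

lemma sum_smul_sum' {V : Type*} [AddCommGroup V] [Module ℝ V] {ι : Type*} [Fintype ι]
    (P : Matrix ι ι ℝ) (q : ι → ℝ) (x : ι → V) :
    ∑ i, q i • (∑ m, P m i • x m) = ∑ m, P.mulVec q m • x m := by
  simp only [Finset.smul_sum, smul_smul]
  rw [Finset.sum_comm]
  refine Finset.sum_congr rfl fun m _ => ?_
  rw [← Finset.sum_smul]
  congr 1
  simp [Matrix.mulVec, dotProduct, mul_comm]

lemma backward_dir {Abar Bbar : Matrix (Fin (k+1)) (Fin (k+1)) ℝ}
    (hA3 : ∀ u, Matrix.vecMul u Abar = 0 → ∀ i, i ≠ Fin.last k → u i = 0)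
    (hB2 : ∀ j, Bbar (Fin.last k) j = 0)
    (hB4 : ∀ w : Fin (k+1) → ℝ, w (Fin.last k) = 0 → ∃ v, Bbar.mulVec v = w)
    (B₁ : Basis (Fin (k+1) ⊕ Fin 2) ℝ L₁) (B₂ : Basis (Fin (k+1) ⊕ Fin 2) ℝ L₂)
    (h₁ : IsStructureBasis Abar B₁) (h₂ : IsStructureBasis Bbar B₂)
    (c : ℝ) (C : Matrix (Fin (k+1)) (Fin (k+1)) ℝ) (hc : c ≠ 0) (hC : IsUnit C)
    (hsim : c • Abar = C⁻¹ * Bbar * C) :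
    Nonempty (L₁ ≃ₗ⁅ℝ⁆ L₂) := by
  have hCd := (Matrix.isUnit_iff_isUnit_det C).mp hC
  have hCD : C * C⁻¹ = 1 := Matrix.mul_nonsing_inv C hCd
  have hDC : C⁻¹ * C = 1 := Matrix.nonsing_inv_mul C hCd
  set D := C⁻¹ with hD
  have hBC : Bbar * C = c • (C * Abar) := by
    have h := congrArg (fun M => C * M) hsim
    simp only [Matrix.mul_smul] at h
    rw [← Matrix.mul_assoc, ← Matrix.mul_assoc, hCD, Matrix.one_mul] at h
    exact h.symm
  have hClast : C (Fin.last k) (Fin.last k) ≠ 0 := by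
    intro h0
    have hrow : ∀ m, C (Fin.last k) m = 0 := by
      have hker : Matrix.vecMul (fun m => C (Fin.last k) m) Abar = 0 := by
        funext j
        have h1 : (Bbar * C) (Fin.last k) j = 0 := by
          simp [Matrix.mul_apply, hB2]
        rw [hBC] at h1
        simp only [Matrix.smul_apply, smul_eq_mul] at h1
        have h2 : (C * Abar) (Fin.last k) j = 0 := by
          rcases mul_eq_zero.mp h1 with h | h
          · exact absurd h hc
          · exact h
        simpa [Matrix.vecMul, dotProduct, Matrix.mul_apply] using h2
      intro m
      by_cases hm : m = Fin.last k
      · rw [hm]; exact h0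
      · exact hA3 _ hker m hm
    have hone : Matrix.vecMul (Pi.single (Fin.last k) (1:ℝ)) C = 0 := by
      funext j
      simp only [Matrix.vecMul, dotProduct, Pi.zero_apply]
      rw [Finset.sum_eq_single (Fin.last k)
        (fun b _ hb => by rw [Pi.single_eq_of_ne hb, zero_mul]) (by simp)]
      simp [hrow]
    have hzero : (Pi.single (Fin.last k) (1:ℝ) : Fin (k+1) → ℝ) = 0 := by
      calc Pi.single (Fin.last k) (1:ℝ)
          = Matrix.vecMul (Pi.single (Fin.last k) 1) (C * D) := by
            rw [hCD, Matrix.vecMul_one]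
        _ = Matrix.vecMul (Matrix.vecMul (Pi.single (Fin.last k) 1) C) D := by
            rw [Matrix.vecMul_vecMul]
        _ = 0 := by rw [hone, Matrix.zero_vecMul]
    have := congrFun hzero (Fin.last k)
    simp [Pi.single_eq_same] at this
  set α : ℝ := c * C (Fin.last k) (Fin.last k) with hα
  have hαne : α ≠ 0 := mul_ne_zero hc hClast
  obtain ⟨v, hv⟩ := hB4 (fun i => c * C i (Fin.last k) - if i = Fin.last k then α else 0)
    (by simp [hα])
  set g : (Fin (k+1) ⊕ Fin 2) → L₂ := Sum.elim
    (fun j => ∑ i, C i j • B₂ (Sum.inl i))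
    (fun a => if a = 0 then α • B₂ (Sum.inr 0) + ∑ i, v i • B₂ (Sum.inl i)
      else c⁻¹ • B₂ (Sum.inr 1)) with hg
  have hgl : ∀ j, g (Sum.inl j) = ∑ i, C i j • B₂ (Sum.inl i) := fun j => rfl
  have hg0 : g (Sum.inr 0) = α • B₂ (Sum.inr 0) + ∑ i, v i • B₂ (Sum.inl i) := by
    simp [hg]
  have hg1 : g (Sum.inr 1) = c⁻¹ • B₂ (Sum.inr 1) := by
    simp [hg]
  set f : L₁ →ₗ[ℝ] L₂ := B₁.constr ℝ g with hfdef
  have hf : ∀ t, f (B₁ t) = g t := fun t => B₁.constr_basis ℝ g t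
  -- repr facts
  have hrl : ∀ j, B₂.repr (g (Sum.inl j)) (Sum.inr 1) = 0 := by
    intro j
    rw [hgl]
    simp [map_sum, map_smul, Basis.repr_self, Finsupp.single_apply,
      Finset.sum_apply', Finsupp.smul_apply]
  have hr0 : B₂.repr (g (Sum.inr 0)) (Sum.inr 1) = 0 := by
    rw [hg0]
    simp [map_add, map_sum, map_smul, Basis.repr_self, Finsupp.single_apply,
      Finset.sum_apply', Finsupp.smul_apply]
  -- zero bracket helpers
  have Hz1 : ∀ u : L₂, B₂.repr u (Sum.inr 1) = 0 → ∀ x : Fin (k+1) → ℝ,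
      ⁅u, ∑ m, x m • B₂ (Sum.inl m)⁆ = 0 := by
    intro u hu x
    rw [lie_combo h₂, hu, zero_smul]
  have Hz2 : ∀ u : L₂, B₂.repr u (Sum.inr 1) = 0 → ∀ (β : ℝ) (x : Fin (k+1) → ℝ),
      ⁅u, β • B₂ (Sum.inr 0) + ∑ m, x m • B₂ (Sum.inl m)⁆ = 0 := by
    intro u hu β x
    rw [lie_general h₂, hu, zero_smul]
  -- main bracket values
  have HZX : ∀ j, ⁅g (Sum.inr 1), g (Sum.inl j)⁆ = ∑ i, (C * Abar) i j • B₂ (Sum.inl i) := by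
    intro j
    rw [hg1, hgl, smul_lie, lie_combo h₂]
    simp only [Basis.repr_self, Finsupp.single_eq_same, one_smul]
    rw [Finset.smul_sum]
    refine Finset.sum_congr rfl fun i _ => ?_
    rw [smul_smul, mulVec_col]
    congr 1
    have h3 := congrFun (congrFun hBC i) j
    simp only [Matrix.smul_apply, smul_eq_mul] at h3
    rw [h3, inv_mul_cancel_left₀ hc]
  have HZY : ⁅g (Sum.inr 1), g (Sum.inr 0)⁆ = ∑ i, C i (Fin.last k) • B₂ (Sum.inl i) := by
    rw [hg1, hg0, smul_lie, lie_general h₂]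
    simp only [Basis.repr_self, Finsupp.single_eq_same, one_smul]
    rw [hv]
    have hsplit : ∑ i, (c * C i (Fin.last k) - if i = Fin.last k then α else 0) • B₂ (Sum.inl i)
        = (∑ i, (c * C i (Fin.last k)) • B₂ (Sum.inl i)) - α • B₂ (Sum.inl (Fin.last k)) := by
      simp only [sub_smul, ite_smul, zero_smul]
      rw [Finset.sum_sub_distrib]
      congr 1
      rw [Finset.sum_ite_eq' Finset.univ (Fin.last k)]
      simp
    rw [hsplit]
    rw [add_sub_cancel]
    rw [Finset.smul_sum]
    refine Finset.sum_congr rfl fun i _ => ?_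
    rw [smul_smul, inv_mul_cancel_left₀ hc]
  -- bracket preservation on basis
  have hcase : ∀ t s, f ⁅B₁ t, B₁ s⁆ = ⁅g t, g s⁆ := by
    have skew1 : ∀ (i : Fin (k+1)), ⁅B₁ (Sum.inl i), B₁ (Sum.inr 0)⁆ = 0 := by
      intro i; rw [← lie_skew, h₁.2.1 i, neg_zero]
    rintro (i | a) (j | b)
    · rw [h₁.1 i j, map_zero, hgl j, Hz1 _ (hrl i)]
    · fin_cases b <;> simp only [Fin.zero_eta, Fin.mk_one]
      · rw [skew1 i, map_zero, hg0, Hz2 _ (hrl i)]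
      · rw [← lie_skew, ← lie_skew (g (Sum.inl i)), map_neg, h₁.2.2.1 i, HZX i, map_sum]
        simp only [map_smul, hf, hgl]
        rw [sum_smul_sum C Abar _ i]
    · fin_cases a <;> simp only [Fin.zero_eta, Fin.mk_one]
      · rw [h₁.2.1 j, map_zero, hgl j, Hz1 _ hr0]
      · rw [h₁.2.2.1 j, HZX j, map_sum]
        simp only [map_smul, hf, hgl]
        rw [sum_smul_sum C Abar _ j]
    · fin_cases a <;> fin_cases b <;> simp only [Fin.zero_eta, Fin.mk_one]
      · rw [lie_self, map_zero, lie_self]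
      · rw [← lie_skew, ← lie_skew (g (Sum.inr 0)), map_neg, h₁.2.2.2, HZY, hf, hgl]
      · rw [h₁.2.2.2, HZY, hf, hgl]
      · rw [lie_self, map_zero, lie_self]
  -- f commutes with brackets
  have hbrk : ∀ u w : L₁, f ⁅u, w⁆ = ⁅f u, f w⁆ := by
    let P : L₁ →ₗ[ℝ] L₁ →ₗ[ℝ] L₂ := LinearMap.mk₂ ℝ (fun u w => f ⁅u, w⁆)
      (fun m₁ m₂ n => by simp only [add_lie, map_add])
      (fun a m n => by simp only [smul_lie, map_smul])
      (fun m n₁ n₂ => by simp only [lie_add, map_add])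
      (fun a m n => by simp only [lie_smul, map_smul])
    let Q : L₁ →ₗ[ℝ] L₁ →ₗ[ℝ] L₂ := LinearMap.mk₂ ℝ (fun u w => ⁅f u, f w⁆)
      (fun m₁ m₂ n => by simp only [map_add, add_lie])
      (fun a m n => by simp only [map_smul, smul_lie])
      (fun m n₁ n₂ => by simp only [map_add, lie_add])
      (fun a m n => by simp only [map_smul, lie_smul])
    have hPQ : P = Q := by
      refine LinearMap.ext_basis B₁ B₁ fun t s => ?_
      simp only [P, Q, LinearMap.mk₂_apply]
      rw [hcase t s, hf, hf]
    intro u w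
    have := LinearMap.congr_fun (LinearMap.congr_fun hPQ u) w
    simpa [P, Q] using this
  -- surjectivity
  have hXrange : ∀ x : Fin (k+1) → ℝ, (∑ i, x i • B₂ (Sum.inl i)) ∈ LinearMap.range f := by
    intro x
    refine ⟨∑ j, (D.mulVec x) j • B₁ (Sum.inl j), ?_⟩
    rw [map_sum]
    simp only [map_smul, hf, hgl]
    rw [sum_smul_sum' C (D.mulVec x)]
    rw [Matrix.mulVec_mulVec, hCD, Matrix.one_mulVec]
  have hrange : ∀ t, B₂ t ∈ LinearMap.range f := by
    rintro (i | a)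
    · have h3 := hXrange (Pi.single i 1)
      rwa [Finset.sum_eq_single i
        (fun b _ hb => by rw [Pi.single_eq_of_ne hb, zero_smul]) (by simp),
        Pi.single_eq_same, one_smul] at h3
    · fin_cases a <;> simp only [Fin.zero_eta, Fin.mk_one]
      · have h3 : (α • B₂ (Sum.inr 0) + ∑ i, v i • B₂ (Sum.inl i)) ∈ LinearMap.range f :=
          ⟨B₁ (Sum.inr 0), by rw [hf, hg0]⟩
        have h4 := Submodule.sub_mem _ h3 (hXrange v)
        rw [add_sub_cancel_right] at h4
        have h5 := Submodule.smul_mem _ α⁻¹ h4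
        rwa [smul_smul, inv_mul_cancel₀ hαne, one_smul] at h5
      · refine ⟨c • B₁ (Sum.inr 1), ?_⟩
        rw [map_smul, hf, hg1, smul_smul, mul_inv_cancel₀ hc, one_smul]
  have hsurj : Function.Surjective f := by
    rw [← LinearMap.range_eq_top]
    apply top_unique
    rw [← B₂.span_eq]
    exact Submodule.span_le.mpr (Set.range_subset_iff.mpr hrange)
  have hfd1 : FiniteDimensional ℝ L₁ := Module.Finite.of_basis B₁
  have hfd2 : FiniteDimensional ℝ L₂ := Module.Finite.of_basis B₂
  have hfr : finrank ℝ L₁ = finrank ℝ L₂ := by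
    rw [Module.finrank_eq_card_basis B₁, Module.finrank_eq_card_basis B₂]
  have hinj : Function.Injective f :=
    (LinearMap.injective_iff_surjective_of_finrank_eq_finrank hfr).mpr hsurj
  let eL : L₁ ≃ₗ[ℝ] L₂ := LinearEquiv.ofBijective f ⟨hinj, hsurj⟩
  exact ⟨{ toLinearMap := (f : L₁ →ₗ[ℝ] L₂), map_lie' := fun {x y} => hbrk x y,
           invFun := eL.invFun, left_inv := eL.left_inv, right_inv := eL.right_inv }⟩

end Backward

/-- the Lie algebras `G_Ā` and `G_B̄` attached to structure matrices `Ā`, `B̄`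
of the two block forms are isomorphic iff `Ā ∼ₚ B̄`. -/
theorem lieEquiv_iff_propSimilar
    (n : ℕ) (hn : 4 ≤ n)
    (Abar Bbar : Matrix (Fin (n - 3 + 1)) (Fin (n - 3 + 1)) ℝ)
    (hAbar : ∃ A : Matrix (Fin (n - 3)) (Fin (n - 3)) ℝ, IsUnit A ∧
      (Abar = blockDiag A ∨ Abar = blockShift A))
    (hBbar : ∃ A : Matrix (Fin (n - 3)) (Fin (n - 3)) ℝ, IsUnit A ∧
      (Bbar = blockDiag A ∨ Bbar = blockShift A))
    (L₁ L₂ : Type*) [LieRing L₁] [LieAlgebra ℝ L₁] [LieRing L₂] [LieAlgebra ℝ L₂]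
    (B₁ : Basis (Fin (n - 3 + 1) ⊕ Fin 2) ℝ L₁)
    (B₂ : Basis (Fin (n - 3 + 1) ⊕ Fin 2) ℝ L₂)
    (h₁ : IsStructureBasis Abar B₁) (h₂ : IsStructureBasis Bbar B₂) :
    Nonempty (L₁ ≃ₗ⁅ℝ⁆ L₂) ↔ PropSimilar Abar Bbar := by
  have hk : 0 < n - 3 := by omega
  obtain ⟨hA0, hA2, hA3, hA4⟩ := block_props hk Abar hAbar
  obtain ⟨hB0, hB2, hB3, hB4⟩ := block_props hk Bbar hBbar
  constructor
  · rintro ⟨e⟩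
    exact forward_dir hA0 hA4 hB4 B₁ B₂ h₁ h₂ e
  · rintro ⟨c, C, hc, hC, hsim⟩
    exact backward_dir hA3 hB2 hB4 B₁ B₂ h₁ h₂ c C hc hC hsim
end

section
/- Let m ≥ 1 and let A and B be invertible m×m real matrices. Let Ā and B̄ be the (m+1)×(m+1) matrices with A (respectively B) in the top-left m×m block and zeros elsewhere. Then Ā ∼_p B̄ if and only if A ∼_p B. -/
/-- Auxiliary: extend a `k × k` matrix to a `(k+1)`-square matrix with a `1` in the corner. -/
def extOne {k : ℕ} (C : Matrix (Fin k) (Fin k) ℝ) : Matrix (Fin (k + 1)) (Fin (k + 1)) ℝ :=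
  fun i j => if h : (i : ℕ) < k ∧ (j : ℕ) < k then C ⟨i, h.1⟩ ⟨j, h.2⟩
    else if i = j then 1 else 0

section aux

variable {k : ℕ} (A C D : Matrix (Fin k) (Fin k) ℝ)

@[simp] lemma blockDiag_cc (i j : Fin k) :
    blockDiag A i.castSucc j.castSucc = A i j := by
  simp [blockDiag, i.isLt, j.isLt]

@[simp] lemma blockDiag_cl (i : Fin (k + 1)) :
    blockDiag A i (Fin.last k) = 0 := by
  simp [blockDiag]

@[simp] lemma blockDiag_lc (j : Fin (k + 1)) :
    blockDiag A (Fin.last k) j = 0 := by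
  simp [blockDiag]

@[simp] lemma extOne_cc (i j : Fin k) :
    extOne C i.castSucc j.castSucc = C i j := by
  simp [extOne, i.isLt, j.isLt]

@[simp] lemma extOne_cl (i : Fin k) :
    extOne C i.castSucc (Fin.last k) = 0 := by
  have : i.castSucc ≠ Fin.last k := Fin.ne_of_lt i.castSucc_lt_last
  simp [extOne, this]

@[simp] lemma extOne_lc (j : Fin k) :
    extOne C (Fin.last k) j.castSucc = 0 := by
  have : Fin.last k ≠ j.castSucc := (Fin.ne_of_lt j.castSucc_lt_last).symm
  simp [extOne, this]

@[simp] lemma extOne_ll : extOne C (Fin.last k) (Fin.last k) = 1 := by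
  simp [extOne]

lemma extOne_mul : extOne C * extOne D = extOne (C * D) := by
  funext i j
  induction i using Fin.lastCases with
  | last =>
    induction j using Fin.lastCases with
    | last => simp [Matrix.mul_apply, Fin.sum_univ_castSucc]
    | cast j => simp [Matrix.mul_apply, Fin.sum_univ_castSucc]
  | cast i =>
    induction j using Fin.lastCases with
    | last => simp [Matrix.mul_apply, Fin.sum_univ_castSucc]
    | cast j => simp [Matrix.mul_apply, Fin.sum_univ_castSucc]

lemma extOne_one : extOne (1 : Matrix (Fin k) (Fin k) ℝ) = 1 := by
  funext i j
  induction i using Fin.lastCases with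
  | last =>
    induction j using Fin.lastCases with
    | last => simp [Matrix.one_apply]
    | cast j => simp [Matrix.one_apply, (Fin.ne_of_lt j.castSucc_lt_last).symm]
  | cast i =>
    induction j using Fin.lastCases with
    | last => simp [Matrix.one_apply, Fin.ne_of_lt i.castSucc_lt_last]
    | cast j =>
      by_cases h : i = j
      · simp [h, Matrix.one_apply]
      · have : i.castSucc ≠ j.castSucc := by
          simpa [Fin.castSucc_inj] using h
        simp [Matrix.one_apply, h, this]

lemma extOne_mul_blockDiag : extOne C * blockDiag A = blockDiag (C * A) := by
  funext i j
  induction i using Fin.lastCases with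
  | last =>
    induction j using Fin.lastCases with
    | last => simp [Matrix.mul_apply, Fin.sum_univ_castSucc]
    | cast j => simp [Matrix.mul_apply, Fin.sum_univ_castSucc]
  | cast i =>
    induction j using Fin.lastCases with
    | last => simp [Matrix.mul_apply, Fin.sum_univ_castSucc]
    | cast j => simp [Matrix.mul_apply, Fin.sum_univ_castSucc]

lemma blockDiag_mul_extOne : blockDiag A * extOne C = blockDiag (A * C) := by
  funext i j
  induction i using Fin.lastCases with
  | last =>
    induction j using Fin.lastCases with
    | last => simp [Matrix.mul_apply, Fin.sum_univ_castSucc]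
    | cast j => simp [Matrix.mul_apply, Fin.sum_univ_castSucc]
  | cast i =>
    induction j using Fin.lastCases with
    | last => simp [Matrix.mul_apply, Fin.sum_univ_castSucc]
    | cast j => simp [Matrix.mul_apply, Fin.sum_univ_castSucc]

lemma blockDiag_smul (c : ℝ) : c • blockDiag A = blockDiag (c • A) := by
  funext i j
  induction i using Fin.lastCases with
  | last => simp
  | cast i =>
    induction j using Fin.lastCases with
    | last => simp
    | cast j => simp

end aux

/-- for invertible `m × m` real matrices `A`, `B`, the `(m+1)`-square
matrices `[[A,0],[0,0]]` and `[[B,0],[0,0]]` are proportional similar iff `A ∼ₚ B`. -/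
theorem blockDiag_propSimilar_iff
    (m : ℕ) (hm : 1 ≤ m) (A B : Matrix (Fin m) (Fin m) ℝ)
    (hA : IsUnit A) (hB : IsUnit B) :
    PropSimilar (blockDiag A) (blockDiag B) ↔ PropSimilar A B := by
  constructor
  · rintro ⟨c, E, hc, hE, heq⟩
    -- rewrite as E * (c • Ā) = B̄ * E
    have hEE : E * E⁻¹ = 1 := Matrix.mul_nonsing_inv E (Matrix.isUnit_iff_isUnit_det E |>.mp hE)
    have key : E * (c • blockDiag A) = blockDiag B * E := by
      rw [heq, ← Matrix.mul_assoc, ← Matrix.mul_assoc, hEE, Matrix.one_mul]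
    -- last row of E (restricted to first m columns) is zero
    have hrow : ∀ j : Fin m, E (Fin.last m) j.castSucc = 0 := by
      have hvm : Matrix.vecMul (fun j => E (Fin.last m) j.castSucc) A = 0 := by
        funext j
        have h := congrFun (congrFun key (Fin.last m)) j.castSucc
        simp only [Matrix.mul_apply, Matrix.smul_apply, Fin.sum_univ_castSucc,
          blockDiag_cc, blockDiag_cl, blockDiag_lc, mul_zero, smul_zero,
          add_zero, zero_mul, Finset.sum_const_zero] at h
        have : ∑ k : Fin m, E (Fin.last m) k.castSucc * (c * A k j) = 0 := by
          simpa using h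
        have h2 : c * ∑ k : Fin m, E (Fin.last m) k.castSucc * A k j = 0 := by
          rw [Finset.mul_sum]; rw [← this]; congr 1; funext k; ring
        have := (mul_eq_zero.mp h2).resolve_left hc
        simpa [Matrix.vecMul, dotProduct] using this
      have hinj : Function.Injective (Matrix.vecMul · A) :=
        Matrix.vecMul_injective_iff_isUnit.mpr hA
      have := hinj (a₁ := fun j => E (Fin.last m) j.castSucc) (a₂ := 0)
        (by simpa [Matrix.zero_vecMul] using hvm)
      exact fun j => congrFun this j
    -- the top-left block of E
    set D : Matrix (Fin m) (Fin m) ℝ := fun i j => E i.castSucc j.castSucc with hD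
    -- D is invertible
    have hDunit : IsUnit D := by
      rw [Matrix.isUnit_iff_isUnit_det, isUnit_iff_ne_zero]
      intro hdet
      obtain ⟨v, hv0, hv⟩ := Matrix.exists_mulVec_eq_zero_iff.mpr hdet
      have hEv : Matrix.mulVec E (Fin.snoc v 0) = 0 := by
        funext i
        induction i using Fin.lastCases with
        | last =>
          simp only [Matrix.mulVec, dotProduct, Fin.sum_univ_castSucc,
            Fin.snoc_castSucc, Fin.snoc_last, mul_zero, add_zero]
          simp [hrow]
        | cast i =>
          have := congrFun hv i
          simp only [Matrix.mulVec, dotProduct, Pi.zero_apply] at this ⊢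
          rw [Fin.sum_univ_castSucc]
          simpa [hD] using this
      have hEinj : Function.Injective (E.mulVec) :=
        Matrix.mulVec_injective_iff_isUnit.mpr hE
      have h0 : (Fin.snoc v 0 : Fin (m+1) → ℝ) = 0 := by
        apply hEinj; simpa [Matrix.mulVec_zero] using hEv
      apply hv0
      funext j
      have := congrFun h0 j.castSucc
      simpa using this
    -- main block equation : D * (c • A) = B * D
    have hblock : D * (c • A) = B * D := by
      funext i j
      have h := congrFun (congrFun key i.castSucc) j.castSucc
      simp only [Matrix.mul_apply, Matrix.smul_apply, smul_eq_mul, Fin.sum_univ_castSucc,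
        blockDiag_cc, blockDiag_cl, blockDiag_lc, mul_zero, smul_zero, add_zero,
        zero_mul, Finset.sum_const_zero] at h
      simp only [Matrix.mul_apply, Matrix.smul_apply, smul_eq_mul]
      simpa [hD] using h
    refine ⟨c, D, hc, hDunit, ?_⟩
    have hDD : D⁻¹ * D = 1 := Matrix.nonsing_inv_mul D (Matrix.isUnit_iff_isUnit_det D |>.mp hDunit)
    calc c • A = 1 * (c • A) := by rw [Matrix.one_mul]
      _ = D⁻¹ * (D * (c • A)) := by rw [← hDD, Matrix.mul_assoc]
      _ = D⁻¹ * (B * D) := by rw [hblock]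
      _ = D⁻¹ * B * D := by rw [Matrix.mul_assoc]
  · rintro ⟨c, C, hc, hC, heq⟩
    refine ⟨c, extOne C, hc, ?_, ?_⟩
    · exact (Matrix.isUnit_iff_isUnit_det _).mpr <| Matrix.isUnit_det_of_right_inverse (B := extOne C⁻¹) (by
        rw [extOne_mul, Matrix.mul_nonsing_inv C (Matrix.isUnit_iff_isUnit_det C |>.mp hC),
          extOne_one])
    · have hinv : (extOne C)⁻¹ = extOne C⁻¹ := by
        apply Matrix.inv_eq_right_inv
        rw [extOne_mul, Matrix.mul_nonsing_inv C (Matrix.isUnit_iff_isUnit_det C |>.mp hC),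
          extOne_one]
      rw [hinv, extOne_mul_blockDiag, blockDiag_mul_extOne, blockDiag_smul, heq]
end

section
/- Let γ > 0 and let L be a 6-dimensional real Lie algebra with basis (e₁, …, e₆) whose Lie brackets among basis elements are determined by [e₁, e₃] = e₅, [e₁, e₄] = e₆, [e₂, e₃] = γe₆, [e₂, e₄] = e₅, with all other brackets of basis elements equal to zero (up to antisymmetry). Then there exists a basis (f₁, …, f₆) of L whose only nonzero brackets among basis elements (up to antisymmetry) are [f₁, f₂] = f₃ and [f₄, f₅] = f₆; in particular L is isomorphic to the direct sum 𝔥₃ ⊕ 𝔥₃ of two 3-dimensional Heisenberg Lie algebras. -/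
set_option maxRecDepth 4000
set_option maxHeartbeats 1000000

private lemma cv5 {α : Type*} (a : α) (u : Fin 5 → α) : Matrix.vecCons a u 5 = u 4 := rfl
private lemma cv4 {α : Type*} {m : ℕ} (a : α) (u : Fin (m+4) → α) : Matrix.vecCons a u 4 = u 3 := rfl

/-- let `γ > 0` and let `L` be a 6-dimensional real Lie algebra with a basis
`(e₁, …, e₆)` whose only nonzero brackets (up to antisymmetry) are `[e₁,e₃] = e₅`,
`[e₁,e₄] = e₆`, `[e₂,e₃] = γ e₆`, `[e₂,e₄] = e₅` (indices here start at 0 in the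
formalization).  Then `L` has a basis `(f₁, …, f₆)` whose only nonzero brackets (up to
antisymmetry) are `[f₁,f₂] = f₃` and `[f₄,f₅] = f₆`; i.e. `L ≅ 𝔥₃ ⊕ 𝔥₃` is the direct
sum of two 3-dimensional Heisenberg algebras. -/
theorem morozov_sixth_family_decomposes
    (γ : ℝ) (hγ : 0 < γ)
    (L : Type*) [LieRing L] [LieAlgebra ℝ L]
    (e : Module.Basis (Fin 6) ℝ L)
    (h02 : ⁅e 0, e 2⁆ = e 4)
    (h03 : ⁅e 0, e 3⁆ = e 5)
    (h12 : ⁅e 1, e 2⁆ = γ • e 5)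
    (h13 : ⁅e 1, e 3⁆ = e 4)
    (hz : ∀ i j : Fin 6, i < j →
      ¬((i = 0 ∧ j = 2) ∨ (i = 0 ∧ j = 3) ∨ (i = 1 ∧ j = 2) ∨ (i = 1 ∧ j = 3)) →
      ⁅e i, e j⁆ = 0) :
    ∃ f : Module.Basis (Fin 6) ℝ L,
      ⁅f 0, f 1⁆ = f 2 ∧ ⁅f 3, f 4⁆ = f 5 ∧
      ∀ i j : Fin 6, i < j → ¬((i = 0 ∧ j = 1) ∨ (i = 3 ∧ j = 4)) → ⁅f i, f j⁆ = 0 := by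
  obtain ⟨s, hs0, rfl⟩ : ∃ s : ℝ, 0 < s ∧ γ = s * s :=
    ⟨Real.sqrt γ, Real.sqrt_pos.mpr hγ, (Real.mul_self_sqrt hγ.le).symm⟩
  have h01 : ⁅e 0, e 1⁆ = 0 := hz 0 1 (by decide) (by decide)
  have h04 : ⁅e 0, e 4⁆ = 0 := hz 0 4 (by decide) (by decide)
  have h05 : ⁅e 0, e 5⁆ = 0 := hz 0 5 (by decide) (by decide)
  have h14 : ⁅e 1, e 4⁆ = 0 := hz 1 4 (by decide) (by decide)
  have h15 : ⁅e 1, e 5⁆ = 0 := hz 1 5 (by decide) (by decide)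
  have h23 : ⁅e 2, e 3⁆ = 0 := hz 2 3 (by decide) (by decide)
  have h24 : ⁅e 2, e 4⁆ = 0 := hz 2 4 (by decide) (by decide)
  have h25 : ⁅e 2, e 5⁆ = 0 := hz 2 5 (by decide) (by decide)
  have h34 : ⁅e 3, e 4⁆ = 0 := hz 3 4 (by decide) (by decide)
  have h35 : ⁅e 3, e 5⁆ = 0 := hz 3 5 (by decide) (by decide)
  have h45 : ⁅e 4, e 5⁆ = 0 := hz 4 5 (by decide) (by decide)
  have h10 : ⁅e 1, e 0⁆ = 0 := by rw [← lie_skew, h01, neg_zero]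
  have h20 : ⁅e 2, e 0⁆ = -e 4 := by rw [← lie_skew, h02]
  have h30 : ⁅e 3, e 0⁆ = -e 5 := by rw [← lie_skew, h03]
  have h21 : ⁅e 2, e 1⁆ = -((s*s) • e 5) := by rw [← lie_skew, h12]
  have h31 : ⁅e 3, e 1⁆ = -e 4 := by rw [← lie_skew, h13]
  have h32 : ⁅e 3, e 2⁆ = 0 := by rw [← lie_skew, h23, neg_zero]
  have h40 : ⁅e 4, e 0⁆ = 0 := by rw [← lie_skew, h04, neg_zero]
  have h41 : ⁅e 4, e 1⁆ = 0 := by rw [← lie_skew, h14, neg_zero]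
  have h42 : ⁅e 4, e 2⁆ = 0 := by rw [← lie_skew, h24, neg_zero]
  have h43 : ⁅e 4, e 3⁆ = 0 := by rw [← lie_skew, h34, neg_zero]
  have h50 : ⁅e 5, e 0⁆ = 0 := by rw [← lie_skew, h05, neg_zero]
  have h51 : ⁅e 5, e 1⁆ = 0 := by rw [← lie_skew, h15, neg_zero]
  have h52 : ⁅e 5, e 2⁆ = 0 := by rw [← lie_skew, h25, neg_zero]
  have h53 : ⁅e 5, e 3⁆ = 0 := by rw [← lie_skew, h35, neg_zero]
  have h54 : ⁅e 5, e 4⁆ = 0 := by rw [← lie_skew, h45, neg_zero]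
  set v : Fin 6 → L := ![s • e 0 + e 1, e 2 + s • e 3, (2*s) • e 4 + (2*(s*s)) • e 5,
    s • e 0 - e 1, e 2 - s • e 3, (2*s) • e 4 - (2*(s*s)) • e 5] with hv
  have hdet : IsUnit (e.det v) := by
    rw [Module.Basis.det_apply]
    have hM : e.toMatrix v = !![s, 0, 0, s, 0, 0;
                                1, 0, 0, -1, 0, 0;
                                0, 1, 0, 0, 1, 0;
                                0, s, 0, 0, -s, 0;
                                0, 0, 2*s, 0, 0, 2*s;
                                0, 0, 2*(s*s), 0, 0, -(2*(s*s))] := by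
      ext i j
      fin_cases i <;> fin_cases j <;>
        simp [Module.Basis.toMatrix_apply, hv, map_add, map_sub, map_smul, Finsupp.single_apply,
          cv4, cv5, Matrix.vecHead, Matrix.vecTail]
    rw [hM]
    have : (!![s, 0, 0, s, 0, 0;
               1, 0, 0, -1, 0, 0;
               0, 1, 0, 0, 1, 0;
               0, s, 0, 0, -s, 0;
               0, 0, 2*s, 0, 0, 2*s;
               0, 0, 2*(s*s), 0, 0, -(2*(s*s))] : Matrix (Fin 6) (Fin 6) ℝ).det
        = 32*s*s*s*(s*s) := by
      simp [Matrix.det_succ_row_zero, Fin.sum_univ_succ, Fin.succAbove]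
      ring
    rw [this]
    exact Ne.isUnit (by positivity : (0:ℝ) < 32*s*s*s*(s*s)).ne'
  obtain ⟨hli, hspan⟩ := (Module.Basis.is_basis_iff_det e).mpr hdet
  refine ⟨Module.Basis.mk hli hspan.ge, ?_, ?_, ?_⟩
  · rw [Module.Basis.mk_apply, Module.Basis.mk_apply, Module.Basis.mk_apply]
    simp only [hv, cv4, cv5, Matrix.cons_val_zero, Matrix.cons_val_one, Matrix.head_cons,
      Matrix.cons_val_two, Matrix.cons_val_three, Matrix.tail_cons, Matrix.head_cons]
    simp only [lie_add, add_lie, lie_sub, sub_lie, lie_smul, smul_lie,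
      h01, h02, h03, h12, h13, h10, h20, h21, h30, h31, lie_self]
    module
  · rw [Module.Basis.mk_apply, Module.Basis.mk_apply, Module.Basis.mk_apply]
    simp only [hv, cv4, cv5, Matrix.cons_val_zero, Matrix.cons_val_one, Matrix.head_cons,
      Matrix.cons_val_two, Matrix.cons_val_three, Matrix.tail_cons, Matrix.head_cons]
    simp only [lie_add, add_lie, lie_sub, sub_lie, lie_smul, smul_lie,
      h01, h02, h03, h12, h13, h10, h20, h21, h30, h31, lie_self]
    module
  · intro i j hlt hne
    rw [Module.Basis.mk_apply, Module.Basis.mk_apply]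
    fin_cases i <;> fin_cases j <;>
      first
      | exact absurd hlt (by decide)
      | exact absurd (by decide) hne
      | · simp [hv, cv4, cv5, Matrix.cons_val_zero, Matrix.cons_val_one, Matrix.head_cons,
            Matrix.cons_val_two, Matrix.cons_val_three, Matrix.tail_cons,
            lie_add, add_lie, lie_sub, sub_lie, lie_smul, smul_lie, lie_self,
            h01, h02, h03, h04, h05, h12, h13, h14, h15, h23, h24, h25, h34, h35, h45,
            h10, h20, h21, h30, h31, h32, h40, h41, h42, h43, h50, h51, h52, h53, h54,
            smul_zero, smul_neg, neg_zero, add_zero, zero_add, sub_zero, zero_sub]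
          try module
end
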